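/- Let G = (V,E) be a finite connected simple graph, let T be a spanning subtree of G, and let (x_e)_{e∈E} be a feasible solution of LP^L(G) for nonnegative cut values b^i (i ∈ {1,…,ℓ}). For each edge e' of T define x'_{e'} = Σ_{e={u,v}∈E : e' ∈ P_{u,v}} x_e, where P_{u,v} is the unique path in T connecting u and v. Then (x'_{e'})_{e'∈E(T)} is a feasible solution of LP^L(T) (with the same cut values b^i), and Σ_{e'∈E(T)} x'_{e'} = Σ_{e={u,v}∈E} d_T(u,v) · x_e. -/

import Mathlib

open Finset
open scoped Classical

variable {V : Type} [Fintype V] [DecidableEq V]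

/-- A cut of a graph on vertex set `V`: a nonempty proper subset of the vertices. -/
def IsCut (C : Finset V) : Prop := C.Nonempty ∧ C ≠ Finset.univ

/-- The unordered pair `e` crosses the cut `C`: exactly one of its endpoints lies in `C`. -/
def Crosses (C : Finset V) (e : Sym2 V) : Prop :=
  ∃ u v, e = s(u, v) ∧ u ∈ C ∧ v ∉ C

/-- `δ(C)`: the edges of `G` with exactly one endpoint in `C`. -/
noncomputable def cutEdges (G : SimpleGraph V) (C : Finset V) : Finset (Sym2 V) :=
  G.edgeFinset.filter (Crosses C)

/-- The optimum value of `LP^L(G)`: minimize `∑_{e∈E} x_e` subject to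
`∑_{e∈δ(C)} x_e ≥ ∑_i b^i(C)` for every cut `C`, `x ≥ 0`. -/
noncomputable def LPL (G : SimpleGraph V) (ℓ : ℕ) (b : Fin ℓ → Finset V → ℝ) : ℝ :=
  sInf { y | ∃ x : Sym2 V → ℝ, (∀ e, 0 ≤ x e) ∧
    (∀ C : Finset V, IsCut C → ∑ i, b i C ≤ ∑ e ∈ cutEdges G C, x e) ∧
    y = ∑ e ∈ G.edgeFinset, x e }

/-- The optimum value of `LP^U(G)`: minimize `∑_i ∑_{e∈E} x_{i,e}` subject to
`∑_{e∈δ(C)} x_{i,e} ≥ b^i(C)` for every cut `C` and every `i`, `x ≥ 0`. -/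
noncomputable def LPU (G : SimpleGraph V) (ℓ : ℕ) (b : Fin ℓ → Finset V → ℝ) : ℝ :=
  sInf { y | ∃ x : Fin ℓ → Sym2 V → ℝ, (∀ i e, 0 ≤ x i e) ∧
    (∀ (i : Fin ℓ) (C : Finset V), IsCut C → b i C ≤ ∑ e ∈ cutEdges G C, x i e) ∧
    y = ∑ i, ∑ e ∈ G.edgeFinset, x i e }

/-- The cut values `b` satisfy the sub-additive property. -/
def SubAdd (ℓ : ℕ) (b : Fin ℓ → Finset V → ℝ) : Prop :=
  ∀ (i : Fin ℓ) (C₁ C₂ : Finset V), IsCut C₁ → IsCut C₂ → IsCut (C₁ ∪ C₂) →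
    b i (C₁ ∪ C₂) ≤ b i C₁ + b i C₂

/-- The cut values `b` are nonnegative on cuts. -/
def CutNonneg (ℓ : ℕ) (b : Fin ℓ → Finset V → ℝ) : Prop :=
  ∀ (i : Fin ℓ) (C : Finset V), IsCut C → 0 ≤ b i C

/-- `e` lies on the (in a tree, unique) path `P_{u,v}` connecting `u` and `v` in `T`. -/
def OnTreePath (T : SimpleGraph V) (u v : V) (e : Sym2 V) : Prop :=
  ∃ p : T.Walk u v, p.IsPath ∧ e ∈ p.edges

/-- The pushed-forward solution: `x'_{e'} = ∑_{e = {u,v} ∈ E(G) : e' ∈ P_{u,v}} x_e`. -/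
noncomputable def pushed (G T : SimpleGraph V) (x : Sym2 V → ℝ) (e' : Sym2 V) : ℝ :=
  ∑ e ∈ G.edgeFinset.filter
    (fun e => OnTreePath T (Quot.out e).1 (Quot.out e).2 e'), x e


section Aux

open SimpleGraph

variable {V : Type} [Fintype V] [DecidableEq V]

lemma walk_crossing {T : SimpleGraph V} {C : Finset V} :
    ∀ {u v : V} (p : T.Walk u v), u ∈ C → v ∉ C → ∃ e' ∈ p.edges, Crosses C e' := by
  intro u v p
  induction p with
  | nil => intro h h'; exact absurd h h'
  | @cons a w c h q ih =>
    intro hu hv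
    by_cases hw : w ∈ C
    · obtain ⟨e', he, hc⟩ := ih hw hv
      exact ⟨e', by simp [he], hc⟩
    · exact ⟨s(a, w), by simp, ⟨a, w, rfl, hu, hw⟩⟩

lemma onTreePath_iff {T : SimpleGraph V} (htree : T.IsTree) {u v : V}
    (p : T.Walk u v) (hp : p.IsPath) (e' : Sym2 V) :
    OnTreePath T u v e' ↔ e' ∈ p.edges := by
  constructor
  · rintro ⟨q, hq, he⟩
    have h := htree.2.path_unique ⟨q, hq⟩ ⟨p, hp⟩
    have hqp : q = p := congrArg Subtype.val h
    exact hqp ▸ he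
  · intro he; exact ⟨p, hp, he⟩

lemma path_length_eq_dist {T : SimpleGraph V} (htree : T.IsTree) {u v : V}
    (p : T.Walk u v) (hp : p.IsPath) : p.length = T.dist u v := by
  obtain ⟨q, hq⟩ := htree.1.exists_walk_length_eq_dist u v
  have h1 : q.toPath = (⟨p, hp⟩ : T.Path u v) := htree.2.path_unique _ _
  have h2 : (q.toPath : T.Walk u v).length ≤ q.length := Walk.length_bypass_le q
  have h3 : T.dist u v ≤ p.length := SimpleGraph.dist_le p
  rw [h1] at h2
  simp only at h2
  omega

lemma sym2_out_eq (e : Sym2 V) : s((Quot.out e).1, (Quot.out e).2) = e := by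
  change Quot.mk _ (Quot.out e) = e
  exact Quot.out_eq e

end Aux

/-- Pushing a feasible solution of `LP^L(G)` onto a spanning subtree `T` along
unique tree paths yields a feasible solution of `LP^L(T)` with the same cut values, whose
objective value equals `∑_{e={u,v}∈E(G)} d_T(u,v) · x_e`. -/
theorem statement5 (V : Type) [Fintype V] [DecidableEq V] (G T : SimpleGraph V)
    (hG : G.Connected) (hsub : T ≤ G) (htree : T.IsTree)
    (ℓ : ℕ) (b : Fin ℓ → Finset V → ℝ) (hb : CutNonneg ℓ b)
    (x : Sym2 V → ℝ) (hx0 : ∀ e, 0 ≤ x e)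
    (hxfeas : ∀ C : Finset V, IsCut C → ∑ i, b i C ≤ ∑ e ∈ cutEdges G C, x e) :
    (∀ e', 0 ≤ pushed G T x e') ∧
    (∀ C : Finset V, IsCut C →
      ∑ i, b i C ≤ ∑ e' ∈ cutEdges T C, pushed G T x e') ∧
    (∑ e' ∈ T.edgeFinset, pushed G T x e' =
      ∑ e ∈ G.edgeFinset, (T.dist (Quot.out e).1 (Quot.out e).2 : ℝ) * x e) := by
  classical
  have hpath : ∀ u v : V, ∃ p : T.Walk u v, p.IsPath := by
    intro u v
    obtain ⟨q⟩ := htree.1 u v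
    exact ⟨q.toPath, q.toPath.2⟩
  choose P hP using hpath
  have hiff : ∀ (u v : V) (e' : Sym2 V), OnTreePath T u v e' ↔ e' ∈ (P u v).edges :=
    fun u v e' => onTreePath_iff htree (P u v) (hP u v) e'
  -- swap lemma
  have hswap : ∀ S : Finset (Sym2 V),
      ∑ e' ∈ S, pushed G T x e' =
      ∑ e ∈ G.edgeFinset,
        ((S.filter (OnTreePath T (Quot.out e).1 (Quot.out e).2)).card : ℝ) * x e := by
    intro S
    unfold pushed
    simp_rw [Finset.sum_filter]
    rw [Finset.sum_comm]
    refine Finset.sum_congr rfl fun e _ => ?_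
    rw [← Finset.sum_filter, Finset.sum_const, nsmul_eq_mul]
  refine ⟨fun e' => Finset.sum_nonneg fun e _ => hx0 e, ?_, ?_⟩
  · -- feasibility
    intro C hC
    refine le_trans (hxfeas C hC) ?_
    rw [hswap (cutEdges T C)]
    calc ∑ e ∈ cutEdges G C, x e
        ≤ ∑ e ∈ cutEdges G C,
            (((cutEdges T C).filter
              (OnTreePath T (Quot.out e).1 (Quot.out e).2)).card : ℝ) * x e := by
          refine Finset.sum_le_sum fun e he => ?_
          obtain ⟨heG, u, v, heq, hu, hv⟩ := Finset.mem_filter.mp he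
          set a := (Quot.out e).1 with ha
          set b := (Quot.out e).2 with hb
          have hab : s(a, b) = s(u, v) := by rw [sym2_out_eq]; exact heq
          have hcross : ∃ e' ∈ (P a b).edges, Crosses C e' := by
            rcases Sym2.eq_iff.mp hab with ⟨h1, h2⟩ | ⟨h1, h2⟩
            · exact walk_crossing (P a b) (h1 ▸ hu) (h2 ▸ hv)
            · obtain ⟨e', he', hc'⟩ :=
                walk_crossing (P a b).reverse (h2 ▸ hu) (h1 ▸ hv)
              rw [SimpleGraph.Walk.edges_reverse, List.mem_reverse] at he'
              exact ⟨e', he', hc'⟩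
          obtain ⟨e', he', hc'⟩ := hcross
          have hmem : e' ∈ (cutEdges T C).filter (OnTreePath T a b) := by
            refine Finset.mem_filter.mpr ⟨Finset.mem_filter.mpr ⟨?_, hc'⟩, (hiff a b e').mpr he'⟩
            exact SimpleGraph.mem_edgeFinset.mpr ((P a b).edges_subset_edgeSet he')
          have h1 : (1 : ℝ) ≤ (((cutEdges T C).filter (OnTreePath T a b)).card : ℝ) := by
            exact_mod_cast Finset.card_pos.mpr ⟨e', hmem⟩
          exact le_mul_of_one_le_left (hx0 e) h1
      _ ≤ ∑ e ∈ G.edgeFinset,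
            (((cutEdges T C).filter
              (OnTreePath T (Quot.out e).1 (Quot.out e).2)).card : ℝ) * x e := by
          refine Finset.sum_le_sum_of_subset_of_nonneg (Finset.filter_subset _ _)
            fun e _ _ => ?_
          exact mul_nonneg (Nat.cast_nonneg _) (hx0 e)
  · -- objective value
    rw [hswap T.edgeFinset]
    refine Finset.sum_congr rfl fun e _ => ?_
    set a := (Quot.out e).1
    set b := (Quot.out e).2
    congr 2
    have hfe : T.edgeFinset.filter (OnTreePath T a b) = (P a b).edges.toFinset := by
      ext e'
      simp only [Finset.mem_filter, List.mem_toFinset, hiff a b e']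
      exact ⟨fun h => h.2, fun h =>
        ⟨SimpleGraph.mem_edgeFinset.mpr ((P a b).edges_subset_edgeSet h), h⟩⟩
    rw [hfe, List.toFinset_card_of_nodup (hP a b).isTrail.edges_nodup,
      SimpleGraph.Walk.length_edges, path_length_eq_dist htree (P a b) (hP a b)]
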